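/- For all (x, y) ∈ ℝ², the partial derivatives of F_{a,b,c} satisfy ‖∂F_{a,b,c}/∂x (x,y)‖² = P(y), ⟨∂F_{a,b,c}/∂x (x,y), ∂F_{a,b,c}/∂y (x,y)⟩ = 0, and ‖∂F_{a,b,c}/∂y (x,y)‖² = 2P(y)/(Q + 2P(y)), where the norm and inner product are the Euclidean ones on ℝ⁶; that is, the pullback by F_{a,b,c} of the Euclidean metric is g = P(y) dx² + (2P(y)/(Q + 2P(y))) dy². -/

import Mathlib

set_option maxHeartbeats 1000000


open Real

/-- Rescaled solution `φ̃₁(y) = √((b²+c²−a²)/(2(c²−a²)))·sin y`. -/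
noncomputable def phi1 (a b c y : ℝ) : ℝ :=
  Real.sqrt ((b ^ 2 + c ^ 2 - a ^ 2) / (2 * (c ^ 2 - a ^ 2))) * Real.sin y

/-- Rescaled solution `φ̃₂(y) = √((a²+c²−b²)/(2(c²−b²)))·cos y`. -/
noncomputable def phi2 (a b c y : ℝ) : ℝ :=
  Real.sqrt ((a ^ 2 + c ^ 2 - b ^ 2) / (2 * (c ^ 2 - b ^ 2))) * Real.cos y

/-- Rescaled solution `φ̃₃(y) = √((a²+b²−c²)/(2(b²−c²)))·√(1 − ((b²−a²)/(c²−a²))·sin² y)`. -/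
noncomputable def phi3 (a b c y : ℝ) : ℝ :=
  Real.sqrt ((a ^ 2 + b ^ 2 - c ^ 2) / (2 * (b ^ 2 - c ^ 2))) *
    Real.sqrt (1 - (b ^ 2 - a ^ 2) / (c ^ 2 - a ^ 2) * Real.sin y ^ 2)

/-- The doubly periodic map `F_{a,b,c} : ℝ² → ℝ⁶`, where `ℝ⁶` carries the Euclidean
inner product. -/
noncomputable def Fabc (a b c : ℝ) (p : ℝ × ℝ) : EuclideanSpace ℝ (Fin 6) :=
  (WithLp.equiv 2 (Fin 6 → ℝ)).symm
    ![Real.sin (a * p.1) * phi1 a b c p.2,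
      Real.cos (a * p.1) * phi1 a b c p.2,
      Real.sin (b * p.1) * phi2 a b c p.2,
      Real.cos (b * p.1) * phi2 a b c p.2,
      Real.sin (c * p.1) * phi3 a b c p.2,
      Real.cos (c * p.1) * phi3 a b c p.2]

lemma hd_sin (k K x : ℝ) :
    HasDerivAt (fun t => Real.sin (k * t) * K) (Real.cos (k * x) * k * K) x := by
  have h1 : HasDerivAt (fun t : ℝ => k * t) k x := by
    simpa using (hasDerivAt_id x).const_mul k
  exact ((Real.hasDerivAt_sin (k * x)).comp x h1).mul_const K

lemma hd_cos (k K x : ℝ) :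
    HasDerivAt (fun t => Real.cos (k * t) * K) (-Real.sin (k * x) * k * K) x := by
  have h1 : HasDerivAt (fun t : ℝ => k * t) k x := by
    simpa using (hasDerivAt_id x).const_mul k
  exact ((Real.hasDerivAt_cos (k * x)).comp x h1).mul_const K

lemma cons_val_five' {α : Type*} (p0 p1 p2 p3 p4 p5 : α) :
    (![p0,p1,p2,p3,p4,p5] : Fin 6 → α) 5 = p5 := rfl

lemma euclidean_norm_sq (w : EuclideanSpace ℝ (Fin 6)) : ‖w‖ ^ 2 = ∑ i, w i ^ 2 := by
  rw [EuclideanSpace.norm_eq, Real.sq_sqrt (by positivity)]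
  simp [sq_abs]

lemma euclidean_inner_eq (w v : EuclideanSpace ℝ (Fin 6)) :
    (inner ℝ w v : ℝ) = ∑ i, w i * v i := by
  simp [PiLp.inner_apply, RCLike.inner_apply, mul_comm]

open RealInnerProductSpace in
/-- The partial derivatives of `F_{a,b,c}` satisfy
`‖∂F/∂x‖² = P(y)`, `⟨∂F/∂x, ∂F/∂y⟩ = 0` and `‖∂F/∂y‖² = 2P(y)/(Q+2P(y))`,
where `P(y) = (c² + (b²−a²)cos 2y)/2` and `Q = c² − a² − b²`; that is, the pullback of
the Euclidean metric is `g = P(y)dx² + (2P(y)/(Q+2P(y)))dy²`. -/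
theorem Fabc_pullback_metric (a b c : ℝ) (ha : a ^ 2 < c ^ 2) (hb : b ^ 2 < c ^ 2)
    (habc : a ^ 2 + b ^ 2 ≤ c ^ 2) :
    ∀ x y : ℝ,
      ‖deriv (fun t : ℝ => Fabc a b c (t, y)) x‖ ^ 2
          = (c ^ 2 + (b ^ 2 - a ^ 2) * Real.cos (2 * y)) / 2 ∧
      ⟪deriv (fun t : ℝ => Fabc a b c (t, y)) x,
          deriv (fun t : ℝ => Fabc a b c (x, t)) y⟫ = 0 ∧
      ‖deriv (fun t : ℝ => Fabc a b c (x, t)) y‖ ^ 2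
          = 2 * ((c ^ 2 + (b ^ 2 - a ^ 2) * Real.cos (2 * y)) / 2) /
            ((c ^ 2 - a ^ 2 - b ^ 2) + 2 * ((c ^ 2 + (b ^ 2 - a ^ 2) * Real.cos (2 * y)) / 2)) := by
  intro x y
  have hca : (0:ℝ) < c ^ 2 - a ^ 2 := by linarith
  have hcb : (0:ℝ) < c ^ 2 - b ^ 2 := by linarith
  have hbc_ne : b ^ 2 - c ^ 2 ≠ 0 := by intro h; linarith [sub_eq_zero.mp h]
  have hA : 0 ≤ (b ^ 2 + c ^ 2 - a ^ 2) / (2 * (c ^ 2 - a ^ 2)) :=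
    div_nonneg (by nlinarith [sq_nonneg b]) (by linarith)
  have hB : 0 ≤ (a ^ 2 + c ^ 2 - b ^ 2) / (2 * (c ^ 2 - b ^ 2)) :=
    div_nonneg (by nlinarith [sq_nonneg a]) (by linarith)
  have hC : 0 ≤ (a ^ 2 + b ^ 2 - c ^ 2) / (2 * (b ^ 2 - c ^ 2)) := by
    rw [div_nonneg_iff]; right; constructor <;> linarith
  have hu2 : 0 < c ^ 2 - a ^ 2 - (b ^ 2 - a ^ 2) * Real.sin y ^ 2 := by
    rcases eq_or_lt_of_le (Real.sin_sq_le_one y) with h1 | h1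
    · nlinarith [h1]
    · nlinarith [mul_pos (by linarith : (0:ℝ) < 1 - Real.sin y ^ 2) hca,
        mul_nonneg (sq_nonneg (Real.sin y)) hcb.le]
  have hu : 0 < 1 - (b ^ 2 - a ^ 2) / (c ^ 2 - a ^ 2) * Real.sin y ^ 2 := by
    rw [sub_pos, div_mul_eq_mul_div, div_lt_one hca]; linarith
  -- x-derivative
  have hgx : HasDerivAt
      (fun t : ℝ => (![Real.sin (a*t) * phi1 a b c y, Real.cos (a*t) * phi1 a b c y,
        Real.sin (b*t) * phi2 a b c y, Real.cos (b*t) * phi2 a b c y,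
        Real.sin (c*t) * phi3 a b c y, Real.cos (c*t) * phi3 a b c y] : Fin 6 → ℝ))
      (![Real.cos (a*x) * a * phi1 a b c y, -Real.sin (a*x) * a * phi1 a b c y,
        Real.cos (b*x) * b * phi2 a b c y, -Real.sin (b*x) * b * phi2 a b c y,
        Real.cos (c*x) * c * phi3 a b c y, -Real.sin (c*x) * c * phi3 a b c y]) x := by
    apply hasDerivAt_pi.mpr
    intro i
    fin_cases i
    · exact hd_sin a _ x
    · exact hd_cos a _ x
    · exact hd_sin b _ x
    · exact hd_cos b _ x
    · exact hd_sin c _ x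
    · exact hd_cos c _ x
  have hFx : HasDerivAt (fun t : ℝ => Fabc a b c (t, y))
      ((WithLp.equiv 2 (Fin 6 → ℝ)).symm
        (![Real.cos (a*x) * a * phi1 a b c y, -Real.sin (a*x) * a * phi1 a b c y,
        Real.cos (b*x) * b * phi2 a b c y, -Real.sin (b*x) * b * phi2 a b c y,
        Real.cos (c*x) * c * phi3 a b c y, -Real.sin (c*x) * c * phi3 a b c y])) x :=
    ((PiLp.continuousLinearEquiv 2 ℝ (fun _ : Fin 6 => ℝ)).symm.toContinuousLinearMap.hasFDerivAt).comp_hasDerivAt x hgx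
  -- y-derivatives of the phis
  have hphi1 : HasDerivAt (fun t => phi1 a b c t)
      (Real.sqrt ((b ^ 2 + c ^ 2 - a ^ 2) / (2 * (c ^ 2 - a ^ 2))) * Real.cos y) y :=
    (Real.hasDerivAt_sin y).const_mul _
  have hphi2 : HasDerivAt (fun t => phi2 a b c t)
      (Real.sqrt ((a ^ 2 + c ^ 2 - b ^ 2) / (2 * (c ^ 2 - b ^ 2))) * -Real.sin y) y :=
    (Real.hasDerivAt_cos y).const_mul _
  have hw : HasDerivAt (fun t : ℝ => 1 - (b ^ 2 - a ^ 2) / (c ^ 2 - a ^ 2) * Real.sin t ^ 2)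
      (-((b ^ 2 - a ^ 2) / (c ^ 2 - a ^ 2) * (2 * Real.sin y * Real.cos y))) y := by
    have := (((Real.hasDerivAt_sin y).fun_pow 2).const_mul ((b ^ 2 - a ^ 2) / (c ^ 2 - a ^ 2))).const_sub 1
    exact this.congr_deriv (by push_cast; ring)
  have hsq : HasDerivAt (fun t : ℝ => Real.sqrt (1 - (b ^ 2 - a ^ 2) / (c ^ 2 - a ^ 2) * Real.sin t ^ 2))
      (1 / (2 * Real.sqrt (1 - (b ^ 2 - a ^ 2) / (c ^ 2 - a ^ 2) * Real.sin y ^ 2)) *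
        -((b ^ 2 - a ^ 2) / (c ^ 2 - a ^ 2) * (2 * Real.sin y * Real.cos y))) y :=
    (Real.hasDerivAt_sqrt hu.ne').comp y hw
  have hphi3 : HasDerivAt (fun t => phi3 a b c t)
      (Real.sqrt ((a ^ 2 + b ^ 2 - c ^ 2) / (2 * (b ^ 2 - c ^ 2))) *
        (1 / (2 * Real.sqrt (1 - (b ^ 2 - a ^ 2) / (c ^ 2 - a ^ 2) * Real.sin y ^ 2)) *
          -((b ^ 2 - a ^ 2) / (c ^ 2 - a ^ 2) * (2 * Real.sin y * Real.cos y)))) y :=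
    hsq.const_mul _
  have hgy : HasDerivAt
      (fun t : ℝ => (![Real.sin (a*x) * phi1 a b c t, Real.cos (a*x) * phi1 a b c t,
        Real.sin (b*x) * phi2 a b c t, Real.cos (b*x) * phi2 a b c t,
        Real.sin (c*x) * phi3 a b c t, Real.cos (c*x) * phi3 a b c t] : Fin 6 → ℝ))
      (![Real.sin (a*x) * (Real.sqrt ((b ^ 2 + c ^ 2 - a ^ 2) / (2 * (c ^ 2 - a ^ 2))) * Real.cos y),
        Real.cos (a*x) * (Real.sqrt ((b ^ 2 + c ^ 2 - a ^ 2) / (2 * (c ^ 2 - a ^ 2))) * Real.cos y),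
        Real.sin (b*x) * (Real.sqrt ((a ^ 2 + c ^ 2 - b ^ 2) / (2 * (c ^ 2 - b ^ 2))) * -Real.sin y),
        Real.cos (b*x) * (Real.sqrt ((a ^ 2 + c ^ 2 - b ^ 2) / (2 * (c ^ 2 - b ^ 2))) * -Real.sin y),
        Real.sin (c*x) * (Real.sqrt ((a ^ 2 + b ^ 2 - c ^ 2) / (2 * (b ^ 2 - c ^ 2))) *
          (1 / (2 * Real.sqrt (1 - (b ^ 2 - a ^ 2) / (c ^ 2 - a ^ 2) * Real.sin y ^ 2)) *
            -((b ^ 2 - a ^ 2) / (c ^ 2 - a ^ 2) * (2 * Real.sin y * Real.cos y)))),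
        Real.cos (c*x) * (Real.sqrt ((a ^ 2 + b ^ 2 - c ^ 2) / (2 * (b ^ 2 - c ^ 2))) *
          (1 / (2 * Real.sqrt (1 - (b ^ 2 - a ^ 2) / (c ^ 2 - a ^ 2) * Real.sin y ^ 2)) *
            -((b ^ 2 - a ^ 2) / (c ^ 2 - a ^ 2) * (2 * Real.sin y * Real.cos y))))]) y := by
    apply hasDerivAt_pi.mpr
    intro i
    fin_cases i
    · exact hphi1.const_mul _
    · exact hphi1.const_mul _
    · exact hphi2.const_mul _
    · exact hphi2.const_mul _
    · exact hphi3.const_mul _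
    · exact hphi3.const_mul _
  have hFy : HasDerivAt (fun t : ℝ => Fabc a b c (x, t))
      ((WithLp.equiv 2 (Fin 6 → ℝ)).symm
        (![Real.sin (a*x) * (Real.sqrt ((b ^ 2 + c ^ 2 - a ^ 2) / (2 * (c ^ 2 - a ^ 2))) * Real.cos y),
        Real.cos (a*x) * (Real.sqrt ((b ^ 2 + c ^ 2 - a ^ 2) / (2 * (c ^ 2 - a ^ 2))) * Real.cos y),
        Real.sin (b*x) * (Real.sqrt ((a ^ 2 + c ^ 2 - b ^ 2) / (2 * (c ^ 2 - b ^ 2))) * -Real.sin y),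
        Real.cos (b*x) * (Real.sqrt ((a ^ 2 + c ^ 2 - b ^ 2) / (2 * (c ^ 2 - b ^ 2))) * -Real.sin y),
        Real.sin (c*x) * (Real.sqrt ((a ^ 2 + b ^ 2 - c ^ 2) / (2 * (b ^ 2 - c ^ 2))) *
          (1 / (2 * Real.sqrt (1 - (b ^ 2 - a ^ 2) / (c ^ 2 - a ^ 2) * Real.sin y ^ 2)) *
            -((b ^ 2 - a ^ 2) / (c ^ 2 - a ^ 2) * (2 * Real.sin y * Real.cos y)))),
        Real.cos (c*x) * (Real.sqrt ((a ^ 2 + b ^ 2 - c ^ 2) / (2 * (b ^ 2 - c ^ 2))) *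
          (1 / (2 * Real.sqrt (1 - (b ^ 2 - a ^ 2) / (c ^ 2 - a ^ 2) * Real.sin y ^ 2)) *
            -((b ^ 2 - a ^ 2) / (c ^ 2 - a ^ 2) * (2 * Real.sin y * Real.cos y))))])) y :=
    ((PiLp.continuousLinearEquiv 2 ℝ (fun _ : Fin 6 => ℝ)).symm.toContinuousLinearMap.hasFDerivAt).comp_hasDerivAt y hgy
  have h1sq : (phi1 a b c y) ^ 2
      = (b ^ 2 + c ^ 2 - a ^ 2) / (2 * (c ^ 2 - a ^ 2)) * Real.sin y ^ 2 := by
    simp only [phi1]; rw [mul_pow, Real.sq_sqrt hA]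
  have h2sq : (phi2 a b c y) ^ 2
      = (a ^ 2 + c ^ 2 - b ^ 2) / (2 * (c ^ 2 - b ^ 2)) * Real.cos y ^ 2 := by
    simp only [phi2]; rw [mul_pow, Real.sq_sqrt hB]
  have h3sq : (phi3 a b c y) ^ 2
      = (a ^ 2 + b ^ 2 - c ^ 2) / (2 * (b ^ 2 - c ^ 2)) *
        (1 - (b ^ 2 - a ^ 2) / (c ^ 2 - a ^ 2) * Real.sin y ^ 2) := by
    simp only [phi3]; rw [mul_pow, Real.sq_sqrt hC, Real.sq_sqrt hu.le]
  have hUsq : Real.sqrt (1 - (b ^ 2 - a ^ 2) / (c ^ 2 - a ^ 2) * Real.sin y ^ 2) ^ 2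
      = 1 - (b ^ 2 - a ^ 2) / (c ^ 2 - a ^ 2) * Real.sin y ^ 2 := Real.sq_sqrt hu.le
  have hUne : Real.sqrt (1 - (b ^ 2 - a ^ 2) / (c ^ 2 - a ^ 2) * Real.sin y ^ 2) ≠ 0 :=
    (Real.sqrt_pos.mpr hu).ne'
  have hAsq : Real.sqrt ((b ^ 2 + c ^ 2 - a ^ 2) / (2 * (c ^ 2 - a ^ 2))) ^ 2
      = (b ^ 2 + c ^ 2 - a ^ 2) / (2 * (c ^ 2 - a ^ 2)) := Real.sq_sqrt hA
  have hBsq : Real.sqrt ((a ^ 2 + c ^ 2 - b ^ 2) / (2 * (c ^ 2 - b ^ 2))) ^ 2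
      = (a ^ 2 + c ^ 2 - b ^ 2) / (2 * (c ^ 2 - b ^ 2)) := Real.sq_sqrt hB
  have hCsq : Real.sqrt ((a ^ 2 + b ^ 2 - c ^ 2) / (2 * (b ^ 2 - c ^ 2))) ^ 2
      = (a ^ 2 + b ^ 2 - c ^ 2) / (2 * (b ^ 2 - c ^ 2)) := Real.sq_sqrt hC
  have pa := Real.sin_sq_add_cos_sq (a*x)
  have pb := Real.sin_sq_add_cos_sq (b*x)
  have pc := Real.sin_sq_add_cos_sq (c*x)
  have py := Real.sin_sq_add_cos_sq y
  refine ⟨?_, ?_, ?_⟩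
  · rw [hFx.deriv, euclidean_norm_sq]
    simp only [WithLp.equiv_symm_apply, PiLp.toLp_apply, Fin.sum_univ_six, Matrix.cons_val_zero,
      Matrix.cons_val_one, Matrix.head_cons, Matrix.cons_val_two, Matrix.tail_cons,
      Matrix.cons_val_three, Matrix.cons_val_four, cons_val_five']
    have step1 : (Real.cos (a*x) * a * phi1 a b c y) ^ 2 + (-Real.sin (a*x) * a * phi1 a b c y) ^ 2
        + (Real.cos (b*x) * b * phi2 a b c y) ^ 2 + (-Real.sin (b*x) * b * phi2 a b c y) ^ 2
        + (Real.cos (c*x) * c * phi3 a b c y) ^ 2 + (-Real.sin (c*x) * c * phi3 a b c y) ^ 2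
        = a ^ 2 * (phi1 a b c y) ^ 2 + b ^ 2 * (phi2 a b c y) ^ 2 + c ^ 2 * (phi3 a b c y) ^ 2 := by
      linear_combination (a ^ 2 * (phi1 a b c y) ^ 2) * pa + (b ^ 2 * (phi2 a b c y) ^ 2) * pb
        + (c ^ 2 * (phi3 a b c y) ^ 2) * pc
    rw [step1, h1sq, h2sq, h3sq, Real.cos_two_mul, Real.cos_sq']
    field_simp
    ring
  · rw [hFx.deriv, hFy.deriv, euclidean_inner_eq]
    simp only [WithLp.equiv_symm_apply, PiLp.toLp_apply, Fin.sum_univ_six, Matrix.cons_val_zero,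
      Matrix.cons_val_one, Matrix.head_cons, Matrix.cons_val_two, Matrix.tail_cons,
      Matrix.cons_val_three, Matrix.cons_val_four, cons_val_five']
    ring
  · rw [hFy.deriv, euclidean_norm_sq]
    simp only [WithLp.equiv_symm_apply, PiLp.toLp_apply, Fin.sum_univ_six, Matrix.cons_val_zero,
      Matrix.cons_val_one, Matrix.head_cons, Matrix.cons_val_two, Matrix.tail_cons,
      Matrix.cons_val_three, Matrix.cons_val_four, cons_val_five']
    have hden : (c ^ 2 - a ^ 2 - b ^ 2) + 2 * ((c ^ 2 + (b ^ 2 - a ^ 2) * Real.cos (2*y)) / 2)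
        = 2 * (c ^ 2 - a ^ 2 - (b ^ 2 - a ^ 2) * Real.sin y ^ 2) := by
      rw [Real.cos_two_mul, Real.cos_sq']; ring
    rw [hden, Real.cos_two_mul, Real.cos_sq']
    set sA := Real.sqrt ((b ^ 2 + c ^ 2 - a ^ 2) / (2 * (c ^ 2 - a ^ 2)))
    set sB := Real.sqrt ((a ^ 2 + c ^ 2 - b ^ 2) / (2 * (c ^ 2 - b ^ 2)))
    set sC := Real.sqrt ((a ^ 2 + b ^ 2 - c ^ 2) / (2 * (b ^ 2 - c ^ 2)))
    set sU := Real.sqrt (1 - (b ^ 2 - a ^ 2) / (c ^ 2 - a ^ 2) * Real.sin y ^ 2)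
    have key : sA ^ 2 * Real.cos y ^ 2 + sB ^ 2 * Real.sin y ^ 2
        + sC ^ 2 * ((b ^ 2 - a ^ 2) / (c ^ 2 - a ^ 2) * (2 * Real.sin y * Real.cos y)) ^ 2
          / (4 * sU ^ 2)
        = 2 * ((c ^ 2 + (b ^ 2 - a ^ 2) * (2 * (1 - Real.sin y ^ 2) - 1)) / 2) /
            (2 * (c ^ 2 - a ^ 2 - (b ^ 2 - a ^ 2) * Real.sin y ^ 2)) := by
      have hsc : (2 * Real.sin y * Real.cos y) ^ 2 = 4 * Real.sin y ^ 2 * (1 - Real.sin y ^ 2) := by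
        linear_combination (4 * Real.sin y ^ 2) * py
      rw [hAsq, hBsq, hCsq, hUsq, Real.cos_sq', mul_pow, hsc]
      have hne2 : c ^ 2 - a ^ 2 - Real.sin y ^ 2 * (b ^ 2 - a ^ 2) ≠ 0 := by
        rw [mul_comm]; exact hu2.ne'
      rw [show 1 - (b ^ 2 - a ^ 2) / (c ^ 2 - a ^ 2) * Real.sin y ^ 2
          = (c ^ 2 - a ^ 2 - (b ^ 2 - a ^ 2) * Real.sin y ^ 2) / (c ^ 2 - a ^ 2) by
        field_simp]
      field_simp
      ring
    have step3 : (Real.sin (a*x) * (sA * Real.cos y)) ^ 2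
        + (Real.cos (a*x) * (sA * Real.cos y)) ^ 2
        + (Real.sin (b*x) * (sB * -Real.sin y)) ^ 2
        + (Real.cos (b*x) * (sB * -Real.sin y)) ^ 2
        + (Real.sin (c*x) * (sC * (1 / (2 * sU) *
            -((b ^ 2 - a ^ 2) / (c ^ 2 - a ^ 2) * (2 * Real.sin y * Real.cos y))))) ^ 2
        + (Real.cos (c*x) * (sC * (1 / (2 * sU) *
            -((b ^ 2 - a ^ 2) / (c ^ 2 - a ^ 2) * (2 * Real.sin y * Real.cos y))))) ^ 2
        = sA ^ 2 * Real.cos y ^ 2 + sB ^ 2 * Real.sin y ^ 2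
          + sC ^ 2 * ((b ^ 2 - a ^ 2) / (c ^ 2 - a ^ 2) * (2 * Real.sin y * Real.cos y)) ^ 2
            / (4 * sU ^ 2) := by
      linear_combination ((sA * Real.cos y) ^ 2) * pa + ((sB * -Real.sin y) ^ 2) * pb
        + ((sC * (1 / (2 * sU) *
            -((b ^ 2 - a ^ 2) / (c ^ 2 - a ^ 2) * (2 * Real.sin y * Real.cos y)))) ^ 2) * pc
    rw [step3]
    exact key
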